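/- Let L be the Laplacian matrix of a weighted undirected graph on vertex set V with |V| = N, and let S₁, S₂ be nonempty disjoint subsets of V with S₁ ∪ S₂ = V. Then the second-smallest eigenvalue satisfies λ₂(L) ≤ e(S₁,S₂)/|S₁| + e(S₂,S₁)/|S₂|, where e(S₁,S₂) = Σ_{i∈S₁, j∈S₂} w_{ij}. -/

import Mathlib

open Matrix Finset

lemma aux {N : ℕ} (A : Matrix (Fin N) (Fin N) ℝ) (hA : A.IsHermitian) (t : ℝ)
    (k₀ : Fin N) (ht : ∀ k, k ≠ k₀ → t ≤ hA.eigenvalues k)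
    (y : Fin N → ℝ)
    (hy : (hA.eigenvectorBasis k₀ : Fin N → ℝ) ⬝ᵥ y = 0) :
    t * (y ⬝ᵥ y) ≤ y ⬝ᵥ (A *ᵥ y) := by
  set v : Fin N → Fin N → ℝ := fun k => (hA.eigenvectorBasis k : Fin N → ℝ) with hv
  set c : Fin N → ℝ := fun k => v k ⬝ᵥ y with hc
  have hdot : ∀ z : EuclideanSpace ℝ (Fin N),
      (z : Fin N → ℝ) ⬝ᵥ y = ∑ k, c k * ((z : Fin N → ℝ) ⬝ᵥ v k) := by
    intro z
    have h0 := hA.eigenvectorBasis.sum_repr' (WithLp.toLp 2 y : EuclideanSpace ℝ (Fin N))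
    have h2 := congrArg (fun u => inner (𝕜 := ℝ) z u) h0
    simp only [inner_sum, real_inner_smul_right, PiLp.inner_apply, RCLike.inner_apply,
      conj_trivial, PiLp.smul_apply, smul_eq_mul] at h2
    rw [show (z : Fin N → ℝ) ⬝ᵥ y = ∑ i, y i * z i from dotProduct_comm _ _, ← h2]
    refine Finset.sum_congr rfl fun k _ => ?_
    simp only [hc, hv, dotProduct, PiLp.smul_apply, smul_eq_mul, Finset.mul_sum]
    exact Finset.sum_congr rfl fun i _ => by simp only [mul_comm (y _)]; ring
  have hvk : ∀ k, A *ᵥ v k = hA.eigenvalues k • v k := fun k => hA.mulVec_eigenvectorBasis k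
  have hyv : ∀ k, y ⬝ᵥ v k = c k := by
    intro k
    rw [hc]
    simp [dotProduct, mul_comm]
  have hyy : y ⬝ᵥ y = ∑ k, c k * c k := by
    rw [hdot (WithLp.toLp 2 y : EuclideanSpace ℝ (Fin N))]
    exact Finset.sum_congr rfl fun k _ => by rw [hyv k]
  have hQ : y ⬝ᵥ (A *ᵥ y) = ∑ k, c k * (hA.eigenvalues k * c k) := by
    rw [Matrix.dotProduct_mulVec, hdot (WithLp.toLp 2 (y ᵥ* A : Fin N → ℝ) : EuclideanSpace ℝ (Fin N))]
    refine Finset.sum_congr rfl fun k _ => ?_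
    rw [← Matrix.dotProduct_mulVec, hvk k, dotProduct_smul, smul_eq_mul, hyv k]
  have hck0 : c k₀ = 0 := hy
  rw [hyy, hQ, Finset.mul_sum]
  refine Finset.sum_le_sum fun k _ => ?_
  by_cases hk : k = k₀
  · subst hk; rw [hck0]; ring_nf; exact le_refl 0
  · nlinarith [ht k hk, sq_nonneg (c k)]

set_option maxHeartbeats 1000000 in
theorem stmt_7 (N : ℕ) (hN : 2 ≤ N) (w : Fin N → Fin N → ℝ)
    (hsymm : ∀ i j, w i j = w j i) (hnn : ∀ i j, 0 ≤ w i j) (hdiag : ∀ i, w i i = 0)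
    (L : Matrix (Fin N) (Fin N) ℝ)
    (hLdef : L = Matrix.of fun i j => (if i = j then ∑ k, w i k else 0) - w i j)
    (hherm : L.IsHermitian)
    (μ : Fin N → ℝ) (hmono : Monotone μ)
    (hperm : ∃ σ : Equiv.Perm (Fin N), ∀ i, μ i = hherm.eigenvalues (σ i))
    (S₁ S₂ : Finset (Fin N)) (h1 : S₁.Nonempty) (h2 : S₂.Nonempty)
    (hdisj : Disjoint S₁ S₂) (hunion : S₁ ∪ S₂ = Finset.univ) :
    μ ⟨1, by omega⟩ ≤
      (∑ i ∈ S₁, ∑ j ∈ S₂, w i j) / (S₁.card : ℝ) +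
      (∑ i ∈ S₂, ∑ j ∈ S₁, w i j) / (S₂.card : ℝ) := by
  obtain ⟨σ, hσ⟩ := hperm
  set μ1 := μ ⟨1, by omega⟩ with hμ1def
  set n₁ : ℝ := (S₁.card : ℝ) with hn₁def
  set n₂ : ℝ := (S₂.card : ℝ) with hn₂def
  set e : ℝ := ∑ i ∈ S₁, ∑ j ∈ S₂, w i j with hedef
  set e' : ℝ := ∑ i ∈ S₂, ∑ j ∈ S₁, w i j with he'def
  have hn1 : 0 < n₁ := by rw [hn₁def]; exact_mod_cast Finset.card_pos.mpr h1
  have hn2 : 0 < n₂ := by rw [hn₂def]; exact_mod_cast Finset.card_pos.mpr h2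
  have hNpos : (0:ℝ) < (N:ℝ) := by exact_mod_cast Nat.lt_of_lt_of_le Nat.zero_lt_two hN
  have hNcard : S₁.card + S₂.card = N := by
    rw [← Finset.card_union_of_disjoint hdisj, hunion, Finset.card_univ, Fintype.card_fin]
  have hNr : n₁ + n₂ = (N:ℝ) := by rw [hn₁def, hn₂def]; exact_mod_cast hNcard
  have he' : e' = e := by
    rw [he'def, hedef, Finset.sum_comm]
    exact Finset.sum_congr rfl fun i _ => Finset.sum_congr rfl fun j _ => hsymm j i
  have he0 : 0 ≤ e := by
    rw [hedef]
    exact Finset.sum_nonneg fun i _ => Finset.sum_nonneg fun j _ => hnn i j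
  set x : Fin N → ℝ := fun i => if i ∈ S₁ then n₂ else -n₁ with hxdef
  have hxS1 : ∀ i ∈ S₁, x i = n₂ := fun i hi => if_pos hi
  have hxS2 : ∀ i ∈ S₂, x i = -n₁ := fun i hi =>
    if_neg (Finset.disjoint_right.mp hdisj hi)
  have hsplit : ∀ f : Fin N → ℝ, ∑ i, f i = ∑ i ∈ S₁, f i + ∑ i ∈ S₂, f i := by
    intro f
    rw [← hunion, Finset.sum_union hdisj]
  have hsum0 : ∑ i, x i = 0 := by
    rw [hsplit x]
    have a1 : ∑ i ∈ S₁, x i = n₁ * n₂ := by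
      rw [Finset.sum_congr rfl hxS1, Finset.sum_const, nsmul_eq_mul, ← hn₁def]
    have a2 : ∑ i ∈ S₂, x i = n₂ * (-n₁) := by
      rw [Finset.sum_congr rfl hxS2, Finset.sum_const, nsmul_eq_mul, ← hn₂def]
    rw [a1, a2]; ring
  have hxx : x ⬝ᵥ x = n₁ * n₂ * N := by
    show ∑ i, x i * x i = _
    rw [hsplit fun i => x i * x i]
    have a1 : ∑ i ∈ S₁, x i * x i = n₁ * (n₂ * n₂) := by
      rw [Finset.sum_congr rfl (fun i hi => by rw [hxS1 i hi]), Finset.sum_const,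
        nsmul_eq_mul, ← hn₁def]
    have a2 : ∑ i ∈ S₂, x i * x i = n₂ * (n₁ * n₁) := by
      rw [Finset.sum_congr rfl (fun i hi => by rw [hxS2 i hi]; ring : ∀ i ∈ S₂, x i * x i = n₁ * n₁),
        Finset.sum_const, nsmul_eq_mul, ← hn₂def]
    rw [a1, a2, ← hNr]; ring
  have hmv : ∀ z : Fin N → ℝ, ∀ i, (L *ᵥ z) i = (∑ k, w i k) * z i - ∑ j, w i j * z j := by
    intro z i
    rw [hLdef]
    simp only [Matrix.mulVec, dotProduct, Matrix.of_apply, sub_mul,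
      Finset.sum_sub_distrib, ite_mul, zero_mul]
    congr 1
    rw [Finset.sum_ite_eq]
    simp [Finset.sum_mul]
  have hL1 : L *ᵥ (fun _ => (1:ℝ)) = 0 := by
    funext i
    rw [hmv (fun _ => (1:ℝ)) i]
    simp
  have hQ : x ⬝ᵥ (L *ᵥ x) = (N:ℝ) * (N:ℝ) * e := by
    have step1 : ∀ i, x i * (L *ᵥ x) i = ∑ j, w i j * (x i * x i - x i * x j) := by
      intro i
      rw [hmv x i, mul_sub, Finset.sum_mul, Finset.mul_sum, Finset.mul_sum,
        ← Finset.sum_sub_distrib]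
      exact Finset.sum_congr rfl fun j _ => by ring
    show ∑ i, x i * (L *ᵥ x) i = _
    rw [Finset.sum_congr rfl fun i _ => step1 i]
    rw [hsplit fun i => ∑ j, w i j * (x i * x i - x i * x j)]
    have hin : ∀ i, ∑ j, w i j * (x i * x i - x i * x j)
        = ∑ j ∈ S₁, w i j * (x i * x i - x i * x j)
          + ∑ j ∈ S₂, w i j * (x i * x i - x i * x j) :=
      fun i => hsplit fun j => w i j * (x i * x i - x i * x j)
    have b1 : ∑ i ∈ S₁, ∑ j, w i j * (x i * x i - x i * x j)
        = 0 + n₂ * (N:ℝ) * e := by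
      rw [Finset.sum_congr rfl fun i (_ : i ∈ S₁) => hin i, Finset.sum_add_distrib]
      congr 1
      · refine Finset.sum_eq_zero fun i hi => Finset.sum_eq_zero fun j hj => ?_
        rw [hxS1 i hi, hxS1 j hj]; ring
      · calc ∑ i ∈ S₁, ∑ j ∈ S₂, w i j * (x i * x i - x i * x j)
            = ∑ i ∈ S₁, ∑ j ∈ S₂, w i j * (n₂ * (N:ℝ)) :=
              Finset.sum_congr rfl fun i hi => Finset.sum_congr rfl fun j hj => by
                rw [hxS1 i hi, hxS2 j hj, ← hNr]; ring
          _ = (∑ i ∈ S₁, ∑ j ∈ S₂, w i j) * (n₂ * (N:ℝ)) := by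
              rw [Finset.sum_mul]
              exact Finset.sum_congr rfl fun i _ => by rw [Finset.sum_mul]
          _ = n₂ * (N:ℝ) * e := by rw [← hedef]; ring
    have b2 : ∑ i ∈ S₂, ∑ j, w i j * (x i * x i - x i * x j)
        = n₁ * (N:ℝ) * e + 0 := by
      rw [Finset.sum_congr rfl fun i (_ : i ∈ S₂) => hin i, Finset.sum_add_distrib]
      congr 1
      · calc ∑ i ∈ S₂, ∑ j ∈ S₁, w i j * (x i * x i - x i * x j)
            = ∑ i ∈ S₂, ∑ j ∈ S₁, w i j * (n₁ * (N:ℝ)) :=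
              Finset.sum_congr rfl fun i hi => Finset.sum_congr rfl fun j hj => by
                rw [hxS2 i hi, hxS1 j hj, ← hNr]; ring
          _ = (∑ i ∈ S₂, ∑ j ∈ S₁, w i j) * (n₁ * (N:ℝ)) := by
              rw [Finset.sum_mul]
              exact Finset.sum_congr rfl fun i _ => by rw [Finset.sum_mul]
          _ = n₁ * (N:ℝ) * e := by rw [← he'def, he']; ring
      · refine Finset.sum_eq_zero fun i hi => Finset.sum_eq_zero fun j hj => ?_
        rw [hxS2 i hi, hxS2 j hj]; ring
    rw [b1, b2, ← hNr]; ring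
  -- eigenvalue bound
  set k₀ : Fin N := σ ⟨0, by omega⟩ with hk₀def
  have hts : ∀ k, k ≠ k₀ → μ1 ≤ hherm.eigenvalues k := by
    intro k hk
    have h := hσ (σ.symm k)
    rw [Equiv.apply_symm_apply] at h
    rw [← h, hμ1def]
    apply hmono
    have hne : σ.symm k ≠ ⟨0, by omega⟩ := by
      intro hEq
      apply hk
      rw [hk₀def, ← hEq, Equiv.apply_symm_apply]
    have h0 : (σ.symm k).val ≠ 0 := fun h' => hne (Fin.ext h')
    rw [Fin.le_def]
    simp only []
    omega
  -- goal in terms of μ1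
  have hgoal : μ1 * (n₁ * n₂) ≤ (N:ℝ) * e → μ1 ≤ e / n₁ + e' / n₂ := by
    intro h
    rw [he', div_add_div _ _ (ne_of_gt hn1) (ne_of_gt hn2), le_div_iff₀ (by positivity)]
    nlinarith [hNr]
  rw [show (∑ i ∈ S₁, ∑ j ∈ S₂, w i j) / (S₁.card:ℝ) + (∑ i ∈ S₂, ∑ j ∈ S₁, w i j) / (S₂.card:ℝ)
      = e / n₁ + e' / n₂ from rfl]
  by_cases hsign : μ1 ≤ 0
  · refine le_trans hsign ?_
    have : 0 ≤ e / n₁ + e / n₂ := by positivity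
    rw [he']; exact this
  push_neg at hsign
  apply hgoal
  -- key inequality
  set one : Fin N → ℝ := fun _ => 1 with honedef
  set vb : Fin N → ℝ := (hherm.eigenvectorBasis k₀ : Fin N → ℝ) with hvbdef
  set c : ℝ := vb ⬝ᵥ x with hcdef
  set d : ℝ := vb ⬝ᵥ one with hddef
  have honeone : one ⬝ᵥ one = (N:ℝ) := by
    simp [honedef, dotProduct]
  have honex : one ⬝ᵥ x = 0 := by
    rw [← hsum0]
    simp [honedef, dotProduct]
  have hxone : x ⬝ᵥ one = 0 := by
    rw [dotProduct_comm]; exact honex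
  have hLsym : Lᵀ = L := by
    rw [hLdef]
    ext i j
    simp only [Matrix.transpose_apply, Matrix.of_apply]
    by_cases h : i = j
    · subst h; simp
    · rw [if_neg h, if_neg (Ne.symm h), hsymm]
  have honeLx : one ⬝ᵥ (L *ᵥ x) = 0 := by
    rw [Matrix.dotProduct_mulVec, ← hLsym, Matrix.vecMul_transpose, hL1]
    simp [zero_dotProduct]
  set y : Fin N → ℝ := c • one - d • x with hydef
  have hy0 : vb ⬝ᵥ y = 0 := by
    rw [hydef, dotProduct_sub, dotProduct_smul, dotProduct_smul,
      ← hcdef, ← hddef]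
    simp [smul_eq_mul]; ring
  have haux := aux L hherm μ1 k₀ hts y hy0
  have hyy : y ⬝ᵥ y = c * c * (N:ℝ) + d * d * (n₁ * n₂ * N) := by
    rw [hydef, sub_dotProduct, smul_dotProduct, smul_dotProduct,
      dotProduct_sub, dotProduct_sub, dotProduct_smul,
      dotProduct_smul, dotProduct_smul, dotProduct_smul,
      honeone, honex, hxone, hxx]
    simp [smul_eq_mul]; ring
  have hLy : L *ᵥ y = c • (L *ᵥ one) - d • (L *ᵥ x) := by
    rw [hydef, Matrix.mulVec_sub, Matrix.mulVec_smul, Matrix.mulVec_smul]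
  have hyLy : y ⬝ᵥ (L *ᵥ y) = d * d * ((N:ℝ) * (N:ℝ) * e) := by
    rw [hLy, hL1, smul_zero, zero_sub, hydef, sub_dotProduct,
      smul_dotProduct, smul_dotProduct, dotProduct_neg,
      dotProduct_neg, dotProduct_smul, dotProduct_smul,
      honeLx, hQ]
    simp [smul_eq_mul]; ring
  rw [hyy, hyLy] at haux
  by_cases hd : d = 0
  · have hc0 : c = 0 := by
      rw [hd] at haux
      simp only [zero_mul, mul_zero, add_zero] at haux
      have h3 : μ1 * (c * c * (N:ℝ)) ≤ μ1 * 0 := by rw [mul_zero]; exact haux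
      have h4 : c * c * (N:ℝ) ≤ 0 := le_of_mul_le_mul_left h3 hsign
      have h5 : (0:ℝ) ≤ c * c * (N:ℝ) := mul_nonneg (mul_self_nonneg c) hNpos.le
      rcases mul_eq_zero.mp (le_antisymm h4 h5) with h7 | h7
      · exact mul_self_eq_zero.mp h7
      · exact absurd h7 (ne_of_gt hNpos)
    have hc0' : vb ⬝ᵥ x = 0 := by rw [← hcdef]; exact hc0
    have haux2 := aux L hherm μ1 k₀ hts x hc0'
    rw [hxx, hQ] at haux2
    nlinarith [haux2, hNpos]
  · have hd2 : 0 < d * d := mul_self_pos.mpr hd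
    have h' : d * d * (μ1 * (n₁ * n₂ * (N:ℝ))) ≤ d * d * ((N:ℝ) * (N:ℝ) * e) := by
      nlinarith [mul_nonneg (le_of_lt hsign) (mul_nonneg (mul_self_nonneg c) (le_of_lt hNpos))]
    have h'' := le_of_mul_le_mul_left h' hd2
    nlinarith [h'', hNpos]
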